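/- arXiv:2010.05521 — 3 statements merged into one kernel-verified Lean document; each statement's English description precedes it below -/
import Mathlib

section
/- The number of vertices of Hamming weight w in the Fibonacci-run graph R_n (equivalently, the number of run-constrained binary strings of length n+2 containing exactly w ones) is the binomial coefficient C(n-w+1, w), for 0 ≤ w ≤ ⌈n/2⌉. -/
/-- Run-constrained binary strings (bits encoded as `1 = true`, `0 = false`):
the strings in which every maximal run of 1s is immediately followed by a
strictly longer run of 0s; equivalently (as stated in the paper), the
concatenations of zero or more words from the infinite alphabet
`R = {0} ∪ {1^i 0^{i+1} : i ≥ 1}`. -/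
inductive RunConstrained : List Bool → Prop where
  | nil : RunConstrained []
  | zero {w : List Bool} : RunConstrained w → RunConstrained (false :: w)
  | block {w : List Bool} (i : ℕ) (hi : 1 ≤ i) : RunConstrained w →
      RunConstrained (List.replicate i true ++ List.replicate (i + 1) false ++ w)

/-- Vertices of the Fibonacci-run graph `R_n`: binary strings `w` of length `n`
such that `w00` is a run-constrained string of length `n+2`. -/
def RunVertex (n : ℕ) :=
  {w : Fin n → Bool // RunConstrained (List.ofFn w ++ [false, false])}

/-- The Fibonacci-run graph `R_n`: two vertices are adjacent iff their
Hamming distance is 1. -/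
def runGraph (n : ℕ) : SimpleGraph (RunVertex n) where
  Adj u v := hammingDist u.1 v.1 = 1
  symm := ⟨by intro u v h; rwa [hammingDist_comm]⟩
  loopless := ⟨by intro u h; simp [hammingDist_self] at h⟩

/-- Encoding of a composition as a run-constrained string. -/
def rcEncode : List ℕ → List Bool
  | [] => []
  | 0 :: l => false :: rcEncode l
  | (i + 1) :: l =>
      List.replicate (i + 1) true ++ List.replicate (i + 2) false ++ rcEncode l

lemma rcEncode_length (l : List ℕ) :
    (rcEncode l).length = l.length + 2 * l.sum := by
  induction l with
  | nil => rfl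
  | cons a t ih =>
    match a with
    | 0 => simp [rcEncode, ih]; omega
    | i + 1 => simp [rcEncode, ih]; omega

lemma rcEncode_count (l : List ℕ) : (rcEncode l).count true = l.sum := by
  induction l with
  | nil => rfl
  | cons a t ih =>
    match a with
    | 0 => simp [rcEncode, ih]
    | i + 1 => simp [rcEncode, ih, List.count_replicate]

lemma rcEncode_rc (l : List ℕ) : RunConstrained (rcEncode l) := by
  induction l with
  | nil => exact RunConstrained.nil
  | cons a t ih =>
    match a with
    | 0 => exact RunConstrained.zero ih
    | i + 1 => exact RunConstrained.block (i + 1) (by omega) ih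

lemma rc_exists {s : List Bool} (h : RunConstrained s) : ∃ l, rcEncode l = s := by
  induction h with
  | nil => exact ⟨[], rfl⟩
  | zero _ ih =>
    obtain ⟨l, hl⟩ := ih
    exact ⟨0 :: l, by simp [rcEncode, hl]⟩
  | block i hi _ ih =>
    obtain ⟨l, hl⟩ := ih
    obtain ⟨j, rfl⟩ : ∃ j, i = j + 1 := ⟨i - 1, by omega⟩
    exact ⟨(j + 1) :: l, by simp [rcEncode, hl]⟩

lemma rcEncode_takeWhile (i : ℕ) (t : List Bool) :
    (List.replicate (i + 1) true ++ List.replicate (i + 2) false ++ t).takeWhile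
      (fun b => b) = List.replicate (i + 1) true := by
  rw [List.append_assoc, List.takeWhile_append_of_pos (by simp)]
  simp [List.replicate_succ]

lemma rcEncode_inj : Function.Injective rcEncode := by
  intro l₁
  induction l₁ with
  | nil =>
    intro l₂ h
    cases l₂ with
    | nil => rfl
    | cons b t₂ =>
      exfalso
      have := congrArg List.length h
      rw [rcEncode_length, rcEncode_length] at this
      simp only [List.length_nil, List.length_cons, List.sum_nil, List.sum_cons] at this
      omega
  | cons a t₁ ih =>
    intro l₂ h
    cases l₂ with
    | nil =>
      exfalso
      have := congrArg List.length h
      rw [rcEncode_length, rcEncode_length] at this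
      simp only [List.length_nil, List.length_cons, List.sum_nil, List.sum_cons] at this
      omega
    | cons b t₂ =>
      match a, b with
      | 0, 0 =>
        simp only [rcEncode, List.cons.injEq] at h
        rw [ih h.2]
      | 0, j + 1 =>
        exfalso
        simp [rcEncode, List.replicate_succ] at h
      | i + 1, 0 =>
        exfalso
        simp [rcEncode, List.replicate_succ] at h
      | i + 1, j + 1 =>
        have hij : i = j := by
          have h2 := congrArg (List.takeWhile (fun b => b)) h
          rw [show rcEncode ((i+1) :: t₁) = List.replicate (i + 1) true ++
              List.replicate (i + 2) false ++ rcEncode t₁ from rfl,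
            show rcEncode ((j+1) :: t₂) = List.replicate (j + 1) true ++
              List.replicate (j + 2) false ++ rcEncode t₂ from rfl,
            rcEncode_takeWhile, rcEncode_takeWhile] at h2
          have h3 := congrArg List.length h2
          simpa using h3
        subst hij
        simp only [rcEncode, List.append_assoc, List.append_cancel_left_eq] at h
        rw [ih h]

lemma rcEncode_length_one {l : List ℕ} (h : (rcEncode l).length = 1) :
    rcEncode l = [false] := by
  match l with
  | [] => simp [rcEncode] at h
  | 0 :: t =>
    have h0 : (rcEncode t).length = 0 := by
      simp only [rcEncode, List.length_cons] at h
      omega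
    simp [rcEncode, List.length_eq_zero_iff.mp h0]
  | (i + 1) :: t =>
    exfalso
    rw [rcEncode_length] at h
    simp only [List.length_cons, List.sum_cons] at h
    omega

lemma repkey (m : ℕ) : List.replicate (m + 1) false ++ [false] =
    List.replicate m false ++ [false, false] := by
  rw [List.replicate_succ', List.append_assoc]
  rfl

lemma rcEncode_tail2 {l : List ℕ} (h : 2 ≤ (rcEncode l).length) :
    ∃ t, rcEncode l = t ++ [false, false] := by
  induction l with
  | nil => simp [rcEncode] at h
  | cons a t ih =>
    match a with
    | 0 =>
      rcases Nat.lt_or_ge (rcEncode t).length 2 with h2 | h2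
      · have hlen : (rcEncode t).length = 1 := by
          simp only [rcEncode, List.length_cons] at h; omega
        have := rcEncode_length_one hlen
        exact ⟨[], by simp [rcEncode, this]⟩
      · obtain ⟨u, hu⟩ := ih h2
        exact ⟨false :: u, by simp [rcEncode, hu]⟩
    | i + 1 =>
      rcases Nat.lt_or_ge (rcEncode t).length 2 with h2 | h2
      · rcases Nat.lt_or_ge (rcEncode t).length 1 with h1 | h1
        · have ht : rcEncode t = [] := List.length_eq_zero_iff.mp (by omega)
          refine ⟨List.replicate (i + 1) true ++ List.replicate i false, ?_⟩
          show List.replicate (i + 1) true ++ List.replicate (i + 2) false ++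
              rcEncode t = _
          rw [ht, List.append_nil, List.append_assoc]
          congr 1
          rw [show (i + 2) = (i + 1) + 1 from rfl, List.replicate_succ' (n := i + 1),
            repkey i]
        · have ht : rcEncode t = [false] := rcEncode_length_one (by omega)
          refine ⟨List.replicate (i + 1) true ++ List.replicate (i + 1) false, ?_⟩
          show List.replicate (i + 1) true ++ List.replicate (i + 2) false ++
              rcEncode t = _
          rw [ht, List.append_assoc, List.append_assoc]
          congr 1
          exact repkey (i + 1)
      · obtain ⟨u, hu⟩ := ih h2
        exact ⟨List.replicate (i + 1) true ++ List.replicate (i + 2) false ++ u,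
          by simp [rcEncode, hu]⟩

lemma rcEncode_ofFn {l : List ℕ} {n : ℕ} (h : (rcEncode l).length = n + 2) :
    List.ofFn (fun i : Fin n => (rcEncode l).getD i false) ++ [false, false] =
      rcEncode l := by
  obtain ⟨t, ht⟩ := rcEncode_tail2 (l := l) (by omega)
  have hlt : t.length = n := by rw [ht] at h; simp at h; omega
  rw [ht]
  congr 1
  apply List.ext_getElem (by simp [hlt])
  intro i h1 h2
  simp only [List.getElem_ofFn]
  have hit : i < t.length := by simpa [hlt] using h2
  rw [List.getD_eq_getElem?_getD, List.getElem?_append_left hit,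
    List.getElem?_eq_getElem hit]
  rfl

/-- The vertex of `R_n` corresponding to an encoded composition. -/
def toVertex (n : ℕ) (l : List ℕ) : Fin n → Bool :=
  fun i => (rcEncode l).getD i false

lemma toVertex_spec {n : ℕ} {l : List ℕ} (h : (rcEncode l).length = n + 2) :
    List.ofFn (toVertex n l) ++ [false, false] = rcEncode l :=
  rcEncode_ofFn h

lemma toVertex_count {n : ℕ} {l : List ℕ} (h : (rcEncode l).length = n + 2) :
    (List.ofFn (toVertex n l)).count true = l.sum := by
  have h1 := congrArg (List.count true) (toVertex_spec h)
  rw [rcEncode_count] at h1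
  simpa using h1

/-- For `0 ≤ k ≤ ⌈n/2⌉`, the number of vertices of Hamming weight `k` in the
Fibonacci-run graph `R_n` (equivalently, the number of run-constrained binary
strings of length `n+2` with exactly `k` ones) is `C(n-k+1, k)`. -/
theorem card_runVertex_weight (n k : ℕ) (hk : k ≤ (n + 1) / 2) :
    Nat.card {w : Fin n → Bool //
        RunConstrained (List.ofFn w ++ [false, false]) ∧
          (List.ofFn w).count true = k} = (n - k + 1).choose k := by
  have h2k : 2 * k ≤ n + 1 := by omega
  obtain ⟨L, hL⟩ : ∃ L, n + 2 - 2 * k = L := ⟨_, rfl⟩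
  have hlen : ∀ P : Fin L → ℕ, (∑ i, P i = k) →
      (rcEncode (List.ofFn P)).length = n + 2 := by
    intro P hP
    rw [rcEncode_length, List.length_ofFn, List.sum_ofFn, hP]
    omega
  have hcard1 : Nat.card {P : Fin L → ℕ // ∑ i, P i = k} =
      Nat.card {w : Fin n → Bool //
        RunConstrained (List.ofFn w ++ [false, false]) ∧
          (List.ofFn w).count true = k} := by
    apply Nat.card_eq_of_bijective
      (fun P => ⟨toVertex n (List.ofFn P.1),
        by rw [toVertex_spec (hlen P.1 P.2)]; exact rcEncode_rc _,
        by rw [toVertex_count (hlen P.1 P.2), List.sum_ofFn]; exact P.2⟩)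
    constructor
    · intro P₁ P₂ hPeq
      apply Subtype.ext
      have hv : toVertex n (List.ofFn P₁.1) = toVertex n (List.ofFn P₂.1) :=
        congrArg Subtype.val hPeq
      have h1 : rcEncode (List.ofFn P₁.1) = rcEncode (List.ofFn P₂.1) := by
        rw [← toVertex_spec (hlen P₁.1 P₁.2), ← toVertex_spec (hlen P₂.1 P₂.2), hv]
      exact List.ofFn_injective (rcEncode_inj h1)
    · rintro ⟨w, hrc, hc⟩
      obtain ⟨l, hl⟩ := rc_exists hrc
      have hsum : l.sum = k := by
        rw [← rcEncode_count, hl]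
        simpa using hc
      have hlen2 : (rcEncode l).length = n + 2 := by rw [hl]; simp
      have hlL : l.length = L := by rw [rcEncode_length] at hlen2; omega
      have hofn : List.ofFn (fun i : Fin L => l.get (Fin.cast hlL.symm i)) = l := by
        apply List.ext_getElem (by simp [hlL])
        intro i h1 h2
        simp [List.getElem_ofFn]
      refine ⟨⟨fun i : Fin L => l.get (Fin.cast hlL.symm i), ?_⟩, ?_⟩
      · rw [← List.sum_ofFn, hofn, hsum]
      · apply Subtype.ext
        show toVertex n (List.ofFn fun i : Fin L => l.get (Fin.cast hlL.symm i)) = w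
        funext i
        show (rcEncode _).getD i false = w i
        rw [hofn, hl]
        have hi : (i : ℕ) < (List.ofFn w).length := by simp [i.isLt]
        rw [List.getD_eq_getElem?_getD, List.getElem?_append_left hi,
          List.getElem?_eq_getElem hi]
        simp [List.getElem_ofFn]
  calc Nat.card {w : Fin n → Bool //
        RunConstrained (List.ofFn w ++ [false, false]) ∧
          (List.ofFn w).count true = k}
      = Nat.card {P : Fin L → ℕ // ∑ i, P i = k} := hcard1.symm
    _ = Nat.card (Sym (Fin L) k) :=
        (Nat.card_congr (Sym.equivNatSumOfFintype (Fin L) k)).symm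
    _ = (L + k - 1).choose k := by
        rw [Nat.card_eq_fintype_card, Sym.card_sym_eq_choose, Fintype.card_fin]
    _ = (n - k + 1).choose k := by
        have h3 : L + k - 1 = n - k + 1 := by clear hlen hcard1; omega
        rw [h3]
end

section
/- The rank generating polynomial of the poset R_n is F(R_n, x) = Σ_{k=0}^{⌈n/2⌉} C(n-k+1, k) x^k, and the generating function Σ_{n≥1} F(R_n, x) t^n equals t(1+x+xt)/(1-t-xt^2) as a formal power series. -/
/-- The Hamming weight of a vertex: the number of 1s. -/
def wt {n : ℕ} (v : RunVertex n) : ℕ :=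
  (Finset.univ.filter fun i => v.1 i = true).card

/-- The covering relation of the poset `R_n`: `v` covers `u` iff `v` is
obtained from `u` by flipping a single 0 to a 1. -/
def Covers {n : ℕ} (u v : RunVertex n) : Prop :=
  ∃ i, u.1 i = false ∧ v.1 = Function.update u.1 i true

attribute [local instance] Classical.propDecidable

noncomputable instance (n : ℕ) : Fintype (RunVertex n) := Subtype.fintype _

/-! ### Auxiliary: block decomposition of run-constrained strings -/

def blk (i : ℕ) : List Bool := List.replicate i true ++ List.replicate (i+1) false

def decode : List ℕ → List Bool
  | [] => []
  | i :: l => blk i ++ decode l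

def sizeSum (l : List ℕ) : ℕ := (l.map fun i => 2*i+1).sum

lemma sizeSum_cons (i : ℕ) (l : List ℕ) : sizeSum (i :: l) = 2*i+1 + sizeSum l := by
  simp [sizeSum]

lemma length_decode (l : List ℕ) : (decode l).length = sizeSum l := by
  induction l with
  | nil => rfl
  | cons i l ih => simp [decode, blk, sizeSum, ih, sizeSum] at *; omega

lemma count_decode (l : List ℕ) : (decode l).count true = l.sum := by
  induction l with
  | nil => rfl
  | cons i l ih => simp [decode, blk, ih, List.count_append, List.count_replicate]

lemma rc_iff (w : List Bool) : RunConstrained w ↔ ∃ l, decode l = w := by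
  constructor
  · intro h
    induction h with
    | nil => exact ⟨[], rfl⟩
    | zero _ ih => obtain ⟨l, rfl⟩ := ih; exact ⟨0 :: l, rfl⟩
    | block i hi _ ih =>
      obtain ⟨l, rfl⟩ := ih
      exact ⟨i :: l, by simp [decode, blk]⟩
  · rintro ⟨l, rfl⟩
    induction l with
    | nil => exact .nil
    | cons i l ih =>
      match i with
      | 0 => exact .zero ih
      | (j+1) => exact .block (j+1) (by omega) ih

lemma repl_head (a b c : ℕ) (x y : List Bool) (hc : 1 ≤ c)
    (h : List.replicate a true ++ List.replicate (a+c) false ++ x =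
         List.replicate b true ++ List.replicate (b+c) false ++ y) :
    a = b ∧ x = y := by
  induction a generalizing b c x y with
  | zero =>
    cases b with
    | zero => exact ⟨rfl, by simpa using h⟩
    | succ b' =>
      exfalso
      cases c with
      | zero => omega
      | succ c' => simp [List.replicate_succ] at h
  | succ a' ih =>
    cases b with
    | zero =>
      exfalso
      cases c with
      | zero => omega
      | succ c' => simp [List.replicate_succ] at h
    | succ b' =>
      rw [List.replicate_succ (n := a'), List.replicate_succ (n := b')] at h
      simp only [List.cons_append, List.cons.injEq, true_and] at h
      have := ih (b := b') (c := c+1) (x := x) (y := y) (by omega)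
        (by rw [show a' + (c+1) = a' + 1 + c from by omega,
                show b' + (c+1) = b' + 1 + c from by omega]; exact h)
      exact ⟨by omega, this.2⟩

lemma blk_head (a b : ℕ) (x y : List Bool) (h : blk a ++ x = blk b ++ y) :
    a = b ∧ x = y := by
  apply repl_head a b 1 x y le_rfl
  simpa [blk] using h

lemma decode_inj : Function.Injective decode := by
  intro l1 l2 h
  induction l1 generalizing l2 with
  | nil =>
    cases l2 with
    | nil => rfl
    | cons b t => exfalso; simp [decode, blk, List.replicate_succ] at h
  | cons a t ih =>
    cases l2 with
    | nil => exfalso; simp [decode, blk, List.replicate_succ] at h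
    | cons b t2 =>
      obtain ⟨h1, h2⟩ := blk_head a b _ _ h
      rw [h1, ih h2]

lemma sizeSum_eq_zero {l : List ℕ} (h : sizeSum l = 0) : l = [] := by
  cases l with
  | nil => rfl
  | cons i t => rw [sizeSum_cons] at h; omega

lemma sizeSum_eq_one {l : List ℕ} (h : sizeSum l = 1) : l = [0] := by
  cases l with
  | nil => simp [sizeSum] at h
  | cons i t =>
    rw [sizeSum_cons] at h
    have hi : i = 0 := by omega
    have ht : sizeSum t = 0 := by omega
    rw [hi, sizeSum_eq_zero ht]

lemma sizeSum_eq_two {l : List ℕ} (h : sizeSum l = 2) : l = [0, 0] := by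
  cases l with
  | nil => simp [sizeSum] at h
  | cons i t =>
    rw [sizeSum_cons] at h
    have hi : i = 0 := by omega
    have ht : sizeSum t = 1 := by omega
    rw [hi, sizeSum_eq_one ht]

lemma sizeSum_eq_three {l : List ℕ} (h : sizeSum l = 3) : l = [0, 0, 0] ∨ l = [1] := by
  cases l with
  | nil => simp [sizeSum] at h
  | cons i t =>
    rw [sizeSum_cons] at h
    match i, h with
    | 0, h =>
      left
      have ht : sizeSum t = 2 := by omega
      rw [sizeSum_eq_two ht]
    | 1, h =>
      right
      have ht : sizeSum t = 0 := by omega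
      rw [sizeSum_eq_zero ht]
    | (j+2), h => exact absurd h (by omega)

lemma decode_ends {l : List ℕ} (h : 2 ≤ sizeSum l) :
    ∃ w, decode l = w ++ [false, false] := by
  induction l with
  | nil => simp [sizeSum] at h
  | cons i t ih =>
    rw [sizeSum_cons] at h
    by_cases ht : 2 ≤ sizeSum t
    · obtain ⟨w, hw⟩ := ih ht
      exact ⟨blk i ++ w, by simp [decode, hw]⟩
    · interval_cases hst : sizeSum t
      · rw [sizeSum_eq_zero hst]
        have hi : 1 ≤ i := by omega
        refine ⟨List.replicate i true ++ List.replicate (i-1) false, ?_⟩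
        simp only [decode, blk, List.append_nil, List.append_assoc]
        congr 1
        rw [show i + 1 = (i-1) + 2 from by omega]
        simp [List.replicate_succ' (n := (i-1)+1), List.replicate_succ' (n := i-1),
          List.append_assoc]
      · rw [sizeSum_eq_one hst]
        refine ⟨List.replicate i true ++ List.replicate i false, ?_⟩
        simp only [decode, blk, List.append_nil, List.append_assoc]
        congr 1
        rw [List.replicate_succ' (n := i)]
        simp

/-! ### The bijection between `RunVertex n` and block-size lists of total size `n+2` -/

def L (m : ℕ) := {l : List ℕ // sizeSum l = m}

lemma decode_split (n : ℕ) (l : L (n+2)) :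
    List.ofFn (fun i : Fin n => (decode l.1).getD i false) ++ [false, false]
      = decode l.1 := by
  obtain ⟨w, hw⟩ := decode_ends (l := l.1) (by rw [l.2]; omega)
  have hlen : (decode l.1).length = n + 2 := by rw [length_decode, l.2]
  have hwlen : w.length = n := by
    have := congrArg List.length hw
    simp at this; omega
  rw [hw]
  congr 1
  apply List.ext_getElem (by simp [hwlen])
  intro i h1 h2
  simp only [List.getElem_ofFn]
  rw [List.getD_eq_getElem _ _ (by simp; omega)]
  exact List.getElem_append_left h2

noncomputable def Phi (n : ℕ) (l : L (n+2)) : RunVertex n :=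
  ⟨fun i => (decode l.1).getD i false, by
    rw [decode_split]; exact (rc_iff _).2 ⟨l.1, rfl⟩⟩

lemma Phi_bij (n : ℕ) : Function.Bijective (Phi n) := by
  constructor
  · intro l1 l2 h
    have h1 := decode_split n l1
    have h2 := decode_split n l2
    have : decode l1.1 = decode l2.1 := by
      rw [← h1, ← h2]
      have : (Phi n l1).1 = (Phi n l2).1 := by rw [h]
      simp only [Phi] at this
      rw [this]
    exact Subtype.ext (decode_inj this)
  · intro v
    obtain ⟨l, hl⟩ := (rc_iff _).1 v.2
    have hs : sizeSum l = n + 2 := by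
      rw [← length_decode, hl]; simp
    refine ⟨⟨l, hs⟩, ?_⟩
    apply Subtype.ext
    funext i
    show (decode l).getD i false = v.1 i
    rw [hl, List.getD_eq_getElem _ _ (by simp; omega)]
    rw [List.getElem_append_left (by simp)]
    simp

lemma count_ofFn {n : ℕ} (f : Fin n → Bool) :
    (List.ofFn f).count true = (Finset.univ.filter fun i => f i = true).card := by
  induction n with
  | zero => simp
  | succ n ih =>
    rw [List.ofFn_succ, List.count_cons, ih (fun i => f i.succ)]
    rw [Finset.card_filter, Finset.card_filter, Fin.sum_univ_succ, add_comm]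
    congr 1
    rcases Bool.dichotomy (f 0) with h | h <;> simp [h]

lemma wt_Phi (n : ℕ) (l : L (n+2)) : wt (Phi n l) = l.1.sum := by
  rw [wt]
  show (Finset.univ.filter fun i => (Phi n l).1 i = true).card = l.1.sum
  rw [← count_ofFn]
  have : (List.ofFn (Phi n l).1).count true = (decode l.1).count true := by
    conv_rhs => rw [← decode_split n l]
    simp [List.count_append, Phi]
  rw [this, count_decode]

/-! ### The recursion equivalence on lists -/

lemma headD_cons_tail {l : List ℕ} (h : l ≠ []) : l.headD 0 :: l.tail = l := by
  cases l with
  | nil => exact absurd rfl h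
  | cons a t => rfl

lemma ne_nil_of_sizeSum {l : List ℕ} {m : ℕ} (h : sizeSum l = m + 1) : l ≠ [] := by
  intro hl; subst hl; simp [sizeSum] at h

def psi (n : ℕ) : L (n+3) ⊕ L (n+2) → L (n+4)
  | .inl ⟨t, h⟩ => ⟨0 :: t, by rw [sizeSum_cons, h]; omega⟩
  | .inr ⟨t, h⟩ => ⟨(t.headD 0 + 1) :: t.tail, by
      have hne : t ≠ [] := ne_nil_of_sizeSum (m := n+1) (by omega)
      have := headD_cons_tail hne
      rw [sizeSum_cons]
      have h2 : sizeSum (t.headD 0 :: t.tail) = n + 2 := by rw [this, h]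
      rw [sizeSum_cons] at h2
      omega⟩

lemma psi_bij (n : ℕ) : Function.Bijective (psi n) := by
  constructor
  · rintro (⟨t1, h1⟩ | ⟨t1, h1⟩) (⟨t2, h2⟩ | ⟨t2, h2⟩) h <;>
      have h' : _ = _ := congrArg Subtype.val h <;>
      simp only [psi, List.cons.injEq] at h'
    · exact congrArg Sum.inl (Subtype.ext h'.2)
    · omega
    · omega
    · have e1 : t1 ≠ [] := ne_nil_of_sizeSum (m := n+1) (by omega)
      have e2 : t2 ≠ [] := ne_nil_of_sizeSum (m := n+1) (by omega)
      apply congrArg Sum.inr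
      apply Subtype.ext
      show t1 = t2
      rw [← headD_cons_tail e1, ← headD_cons_tail e2, h'.2]
      congr 1
      omega
  · rintro ⟨l, hl⟩
    have hne : l ≠ [] := ne_nil_of_sizeSum (m := n+3) (by omega)
    obtain ⟨a, t, rfl⟩ : ∃ a t, l = a :: t := by
      cases l with
      | nil => exact absurd rfl hne
      | cons a t => exact ⟨a, t, rfl⟩
    rw [sizeSum_cons] at hl
    cases a with
    | zero => exact ⟨.inl ⟨t, by omega⟩, Subtype.ext (by simp [psi])⟩
    | succ b =>
      refine ⟨.inr ⟨b :: t, by rw [sizeSum_cons]; omega⟩, ?_⟩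
      exact Subtype.ext (by simp [psi])

/-! ### Counting -/

noncomputable instance instFintypeL : ∀ m : ℕ, Fintype (L m)
  | 0 => @Fintype.ofSubsingleton _ ⟨[], rfl⟩
      ⟨fun a b => Subtype.ext (by rw [sizeSum_eq_zero a.2, sizeSum_eq_zero b.2])⟩
  | 1 => @Fintype.ofSubsingleton _ ⟨[0], rfl⟩
      ⟨fun a b => Subtype.ext (by rw [sizeSum_eq_one a.2, sizeSum_eq_one b.2])⟩
  | (m+2) => Fintype.ofEquiv (RunVertex m) (Equiv.ofBijective (Phi m) (Phi_bij m)).symm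

open Polynomial

noncomputable def F (m : ℕ) : Polynomial ℤ := ∑ l : L m, X ^ l.1.sum

lemma f_eq_F (n : ℕ) : (∑ v : RunVertex n, (X : Polynomial ℤ) ^ wt v) = F (n+2) := by
  rw [F]
  exact (Fintype.sum_bijective (Phi n) (Phi_bij n) _ _ (fun l => by rw [wt_Phi])).symm

lemma F_two : F 2 = 1 := by
  letI : Unique (L 2) := ⟨⟨⟨[0, 0], rfl⟩⟩, fun l => Subtype.ext (sizeSum_eq_two l.2)⟩
  rw [F, Fintype.sum_unique]
  rfl

def bool3 : Bool → L 3 := fun b => if b then ⟨[1], rfl⟩ else ⟨[0, 0, 0], rfl⟩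

lemma bool3_bij : Function.Bijective bool3 := by
  constructor
  · intro a b hab
    rcases a <;> rcases b <;> simp [bool3] at hab ⊢ <;>
      exact absurd (congrArg Subtype.val hab) (by simp)
  · intro l
    rcases sizeSum_eq_three l.2 with h | h
    · exact ⟨false, (Subtype.ext h.symm : bool3 false = l)⟩
    · exact ⟨true, (Subtype.ext h.symm : bool3 true = l)⟩

lemma F_three : F 3 = 1 + X := by
  rw [F, ← Fintype.sum_bijective bool3 bool3_bij
    (fun b => X ^ ((bool3 b).1.sum)) _ (fun b => rfl)]
  rw [Fintype.sum_bool]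
  show (X : Polynomial ℤ) ^ ([1].sum) + X ^ ([0,0,0].sum) = 1 + X
  simp
  ring

lemma F_rec (n : ℕ) : F (n+4) = F (n+3) + X * F (n+2) := by
  rw [show F (n+4) = ∑ s : L (n+3) ⊕ L (n+2), X ^ ((psi n s).1.sum) from
    (Fintype.sum_bijective (psi n) (psi_bij n) _ _ (fun s => rfl)).symm]
  rw [Fintype.sum_sum_type]
  congr 1
  · rw [F]
    apply Finset.sum_congr rfl
    rintro ⟨t, h⟩ -
    show (X : Polynomial ℤ) ^ (0 :: t).sum = X ^ t.sum
    simp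
  · rw [F, Finset.mul_sum]
    apply Finset.sum_congr rfl
    rintro ⟨t, h⟩ -
    show (X : Polynomial ℤ) ^ ((t.headD 0 + 1) :: t.tail).sum = X * X ^ t.sum
    have hne : t ≠ [] := ne_nil_of_sizeSum (m := n+1) (by omega)
    have hsum : t.headD 0 + t.tail.sum = t.sum := by
      conv_rhs => rw [← headD_cons_tail hne]
      simp
    rw [List.sum_cons, show t.headD 0 + 1 + t.tail.sum = t.sum + 1 from by omega,
      pow_succ]
    ring

/-! ### The binomial polynomial -/

noncomputable def P (n : ℕ) : Polynomial ℤ :=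
  ∑ k ∈ Finset.range ((n + 1) / 2 + 1), ((n - k + 1).choose k : Polynomial ℤ) * X ^ k

lemma P_zero : P 0 = 1 := by simp [P]

lemma P_one : P 1 = 1 + X := by
  rw [P]
  rw [show (1+1)/2 + 1 = 2 from rfl]
  rw [Finset.sum_range_succ, Finset.sum_range_one]
  norm_num

lemma P_rec (n : ℕ) : P (n+2) = P (n+1) + X * P n := by
  have ha : (n+2+1)/2 + 1 = (n+1)/2 + 2 := by omega
  have hb : (n+1+1)/2 + 1 ≤ (n+1)/2 + 2 := by omega
  have ext1 : P (n+1) = ∑ k ∈ Finset.range ((n+1)/2 + 2),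
      ((n+1-k+1).choose k : Polynomial ℤ) * X ^ k := by
    rw [P]
    apply Finset.sum_subset (Finset.range_subset_range.2 hb)
    intro k hk hnk
    rw [Finset.mem_range] at hk hnk
    rw [Nat.choose_eq_zero_of_lt (by omega)]
    simp
  have ext2 : X * P n = ∑ k ∈ Finset.range ((n+1)/2 + 2),
      (if k = 0 then 0 else ((n-(k-1)+1).choose (k-1) : Polynomial ℤ)) * X ^ k := by
    simp only [P]
    rw [Finset.mul_sum, Finset.sum_range_succ' _ ((n+1)/2 + 1)]
    simp only [Nat.succ_ne_zero, if_false, if_true, Nat.add_sub_cancel, zero_mul, add_zero,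
      reduceIte]
    apply Finset.sum_congr rfl
    intro k _
    ring
  have hP2 : P (n+2) = ∑ k ∈ Finset.range ((n+1)/2 + 2),
      ((n+2-k+1).choose k : Polynomial ℤ) * X ^ k := by
    simp only [P]
    rw [ha]
  rw [hP2]
  rw [ext1, ext2, ← Finset.sum_add_distrib]
  apply Finset.sum_congr rfl
  intro k hk
  rw [← add_mul]
  congr 1
  rw [Finset.mem_range] at hk
  cases k with
  | zero => simp
  | succ j =>
    have hjn : j ≤ n := by omega
    rw [show n+2-(j+1)+1 = (n+1-j)+1 from by omega,
        show n+1-(j+1)+1 = n+1-j from by omega,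
        if_neg (Nat.succ_ne_zero j),
        show n-(j+1-1)+1 = n+1-j from by omega,
        Nat.choose_succ_succ]
    push_cast
    ring

lemma f_eq_P (n : ℕ) : (∑ v : RunVertex n, (X : Polynomial ℤ) ^ wt v) = P n := by
  induction n using Nat.strong_induction_on with
  | _ n ih =>
    match n with
    | 0 => rw [f_eq_F 0, F_two, P_zero]
    | 1 => rw [f_eq_F 1, F_three, P_one]
    | (n+2) =>
      rw [f_eq_F (n+2), show n+2+2 = n+4 from rfl, F_rec, P_rec,
        ← f_eq_F (n+1), ← f_eq_F n, ih (n+1) (by omega), ih n (by omega)]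

lemma P_two : P 2 = 1 + 2 * X := by
  rw [P_rec, P_one, P_zero]; ring


open Polynomial PowerSeries in
/-- The rank generating polynomial of the poset `R_n` is
`F(R_n,x) = Σ_{k=0}^{⌈n/2⌉} C(n-k+1,k) xᵏ`, and
`Σ_{n≥1} F(R_n,x) tⁿ = t(1+x+xt)/(1-t-xt²)` as a formal power series
(the latter stated multiplied through by the unit `1-t-xt²`). -/
theorem rank_generating_polynomial :
    (∀ n : ℕ, (∑ v : RunVertex n, (Polynomial.X : Polynomial ℤ) ^ wt v) =
      ∑ k ∈ Finset.range ((n + 1) / 2 + 1),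
        ((n - k + 1).choose k : Polynomial ℤ) * Polynomial.X ^ k) ∧
    (PowerSeries.mk fun n =>
        if n = 0 then 0
        else ∑ v : RunVertex n, (Polynomial.X : Polynomial ℤ) ^ wt v) *
        (1 - PowerSeries.X -
          PowerSeries.C (R := Polynomial ℤ) Polynomial.X * PowerSeries.X ^ 2) =
      PowerSeries.X * PowerSeries.C (R := Polynomial ℤ) (1 + Polynomial.X) +
        PowerSeries.C (R := Polynomial ℤ) Polynomial.X * PowerSeries.X ^ 2 := by
  constructor
  · intro n
    rw [f_eq_P n, P]
  · have hmk : (PowerSeries.mk fun n =>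
        if n = 0 then 0
        else ∑ v : RunVertex n, (Polynomial.X : Polynomial ℤ) ^ wt v) =
        PowerSeries.mk fun n => if n = 0 then 0 else P n := by
      apply PowerSeries.ext
      intro d
      simp only [coeff_mk]
      split
      · rfl
      · exact f_eq_P d
    rw [hmk]
    set A := PowerSeries.mk fun n => if n = 0 then (0 : Polynomial ℤ) else P n with hA
    have hcoeff : ∀ d, (PowerSeries.coeff (R := Polynomial ℤ) d) A = if d = 0 then 0 else P d := by
      intro d; rw [hA, coeff_mk]
    have expand : A * (1 - PowerSeries.X - PowerSeries.C (R := Polynomial ℤ) Polynomial.X * PowerSeries.X ^ 2)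
        = A - A * PowerSeries.X -
          PowerSeries.C (R := Polynomial ℤ) Polynomial.X * (A * PowerSeries.X ^ 2) := by ring
    have hrhs : PowerSeries.X * PowerSeries.C (R := Polynomial ℤ) (1 + Polynomial.X) +
        PowerSeries.C (R := Polynomial ℤ) Polynomial.X * PowerSeries.X ^ 2 =
        PowerSeries.C (R := Polynomial ℤ) (1 + Polynomial.X) * PowerSeries.X +
        PowerSeries.C (R := Polynomial ℤ) Polynomial.X * PowerSeries.X ^ 2 := by ring
    rw [expand, hrhs]
    apply PowerSeries.ext
    intro d
    rw [map_sub, map_sub, map_add, PowerSeries.coeff_C_mul, PowerSeries.coeff_C_mul,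
      PowerSeries.coeff_C_mul, PowerSeries.coeff_mul_X_pow', PowerSeries.coeff_X,
      PowerSeries.coeff_X_pow]
    match d with
    | 0 =>
      rw [coeff_zero_mul_X, hcoeff 0]
      norm_num
    | 1 =>
      rw [coeff_succ_mul_X, hcoeff 1, hcoeff 0]
      norm_num [P_one]
    | 2 =>
      rw [coeff_succ_mul_X, hcoeff 2, hcoeff 1, hcoeff 0]
      norm_num [P_two, P_one]
      ring
    | (d+3) =>
      rw [coeff_succ_mul_X, hcoeff (d+3), hcoeff (d+2)]
      have h1 : d + 3 - 2 = d + 1 := by omega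
      have h2 : (2:ℕ) ≤ d + 3 := by omega
      rw [if_pos h2, h1, hcoeff (d+1)]
      simp only [Nat.succ_ne_zero, if_false, reduceIte]
      rw [P_rec (d+1), show d+1+2 = d+3 from rfl, show d+1+1 = d+2 from rfl,
        if_neg (by omega : ¬ (d+3) = 1), if_neg (by omega : ¬ (d+3) = 2)]
      ring
end

section
/- The encoding that maps a binary string w of length n with run decomposition w = 0^{j_0} 1^{i_1} 0^{j_1} ··· 1^{i_k} 0^{j_k} to the string 0 s_{j_0} s_{i_1} s_{j_1} ··· s_{i_k} s_{j_k} (if j_0 > 0) or s_{i_1} s_{j_1} ··· s_{i_k} s_{j_k} (if j_0 = 0), where s_i = 1^i 0^{i+1}, padded with trailing zeros to total length 3n+1, is an injective map from {0,1}^n into the set of run-constrained binary strings of length 3n+1. -/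
/-- The (maximal) runs of a binary string, in order. -/
def runs : List Bool → List (List Bool)
  | [] => []
  | x :: xs =>
    match runs xs with
    | [] => [[x]]
    | r :: rs => if r.head? = some x then (x :: r) :: rs else [x] :: r :: rs

/-- The word `s_i = 1^i 0^{i+1}`. -/
def sWord (i : ℕ) : List Bool :=
  List.replicate i true ++ List.replicate (i + 1) false

/-- The run encoding before zero-padding: a binary string
`w = 0^{j₀} 1^{i₁} 0^{j₁} ⋯ 1^{i_k} 0^{j_k}` is mapped to
`0 s_{j₀} s_{i₁} s_{j₁} ⋯ s_{i_k} s_{j_k}` if `j₀ > 0` (i.e. `w` starts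
with 0), and to `s_{i₁} s_{j₁} ⋯ s_{i_k} s_{j_k}` if `j₀ = 0`. -/
def encodePre (w : List Bool) : List Bool :=
  (if w.head? = some false then [false] else []) ++
    ((runs w).map fun r => sWord r.length).flatten

/-- The run encoding, padded with trailing zeros to total length `3n+1`. -/
def encode (n : ℕ) (w : Fin n → Bool) : List Bool :=
  encodePre (List.ofFn w) ++
    List.replicate (3 * n + 1 - (encodePre (List.ofFn w)).length) false

/-! ### Auxiliary lemmas -/

lemma runs_flatten : ∀ w : List Bool, (runs w).flatten = w := by
  intro w
  induction w with
  | nil => rfl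
  | cons x xs ih =>
    rcases h : runs xs with _ | ⟨r, rs⟩ <;> rw [h] at ih <;>
      simp only [runs, h]
    · simp_all
    · split <;> simp_all

lemma runs_head? : ∀ w r rs, runs w = r :: rs → r.head? = w.head? ∧ r ≠ [] := by
  intro w
  induction w with
  | nil => intro r rs h; simp [runs] at h
  | cons x xs ih =>
    intro r rs h
    rcases h' : runs xs with _ | ⟨r', rs'⟩ <;> simp only [runs, h'] at h
    · obtain ⟨h1, h2⟩ := List.cons.inj h
      simp [← h1]
    · split at h <;> obtain ⟨h1, h2⟩ := List.cons.inj h <;> simp [← h1]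

lemma runs_decomp (k : ℕ) (hk : 1 ≤ k) (c : Bool) (rest : List Bool)
    (hr : rest.head? ≠ some c) :
    runs (List.replicate k c ++ rest) = List.replicate k c :: runs rest := by
  induction k with
  | zero => omega
  | succ k ih =>
    rcases Nat.eq_or_lt_of_le hk with h1 | h1
    · have hk0 : k = 0 := by omega
      subst hk0
      rcases h' : runs rest with _ | ⟨r, rs⟩
      · have hrest : rest = [] := by
          have := runs_flatten rest; rw [h'] at this; simpa using this.symm
        subst hrest
        rfl
      · obtain ⟨hh, _⟩ := runs_head? rest r rs h'
        rw [show List.replicate (0+1) c ++ rest = c :: rest from by simp]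
        simp only [runs, h', hh, if_neg hr]
        rfl
    · have hk1 : 1 ≤ k := by omega
      have ih' := ih hk1
      rw [List.replicate_succ, List.cons_append]
      simp only [runs, ih']
      have hhd : (List.replicate k c).head? = some c := by
        rcases k with _ | m
        · omega
        · simp [List.replicate_succ]
      rw [if_pos hhd, ← List.replicate_succ]

def gEnc (w : List Bool) : List Bool :=
  ((runs w).map fun r => sWord r.length).flatten

lemma gEnc_decomp (k : ℕ) (hk : 1 ≤ k) (c : Bool) (rest : List Bool)
    (hr : rest.head? ≠ some c) :
    gEnc (List.replicate k c ++ rest) = sWord k ++ gEnc rest := by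
  rw [gEnc, runs_decomp k hk c rest hr]
  simp [gEnc]

lemma gEnc_head? (w : List Bool) (hw : w ≠ []) : (gEnc w).head? = some true := by
  rw [gEnc]
  rcases h : runs w with _ | ⟨r, rs⟩
  · have := runs_flatten w; rw [h] at this; simp at this; exact absurd this hw
  · obtain ⟨hh, hne⟩ := runs_head? w r rs h
    have hr1 : 1 ≤ r.length := List.length_pos_iff.mpr hne
    simp only [List.map_cons, List.flatten_cons]
    rw [sWord]
    rcases hl : r.length with _ | m
    · omega
    · simp [List.replicate_succ]

lemma lead_decomp (c : Bool) (w : List Bool) :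
    ∃ k rest, 1 ≤ k ∧ rest.head? ≠ some c ∧
      c :: w = List.replicate k c ++ rest ∧ (c :: w).length = k + rest.length := by
  induction w with
  | nil => exact ⟨1, [], le_refl 1, by simp, by simp, by simp⟩
  | cons x xs ih =>
    by_cases hx : x = c
    · subst hx
      obtain ⟨k, rest, hk, hh, he, hl⟩ := ih
      exact ⟨k + 1, rest, by omega, hh, by rw [List.replicate_succ, List.cons_append, ← he],
        by simp at hl ⊢; omega⟩
    · exact ⟨1, x :: xs, le_refl 1, by simp [hx], by simp, by simp; omega⟩

lemma leadTrue_sWord (k : ℕ) (X : List Bool) :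
    ((sWord k ++ X).takeWhile (· = true)).length = k := by
  rw [sWord, List.append_assoc, List.takeWhile_append]
  rw [List.replicate_succ, List.cons_append, List.takeWhile_cons]
  simp [List.takeWhile_replicate]

lemma key_inj : ∀ N : ℕ, ∀ u v : List Bool, ∀ a b : ℕ, u.length ≤ N →
    u.length = v.length → u.head? = v.head? →
    gEnc u ++ List.replicate a false = gEnc v ++ List.replicate b false → u = v := by
  intro N
  induction N with
  | zero =>
    intro u v a b hN hl _ _
    rw [List.length_eq_zero_iff.mp (Nat.le_zero.mp hN)] at hl ⊢
    exact (List.length_eq_zero_iff.mp hl.symm).symm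
  | succ N ih =>
    intro u v a b hN hl hh heq
    rcases u with _ | ⟨c, u0⟩
    · exact (List.length_eq_zero_iff.mp (by simpa using hl.symm)).symm
    rcases v with _ | ⟨c', v0⟩
    · simp at hl
    have hcc : c = c' := by simpa using hh
    subst hcc
    obtain ⟨k, u', hk, hu'h, hue, hul⟩ := lead_decomp c u0
    obtain ⟨m, v', hm, hv'h, hve, hvl⟩ := lead_decomp c v0
    rw [hue, hve] at heq
    rw [gEnc_decomp k hk c u' hu'h, gEnc_decomp m hm c v' hv'h] at heq
    have hkm : k = m := by
      have h1 := leadTrue_sWord k (gEnc u' ++ List.replicate a false)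
      have h2 := leadTrue_sWord m (gEnc v' ++ List.replicate b false)
      rw [← List.append_assoc] at h1 h2
      rw [heq] at h1
      omega
    subst hkm
    rw [List.append_assoc, List.append_assoc] at heq
    have heq' := List.append_cancel_left heq
    have hl' : u'.length = v'.length := by
      rw [hue, hve] at hl; simp at hl; omega
    have hh' : u'.head? = v'.head? := by
      rcases u' with _ | ⟨x, xs⟩
      · have : v' = [] := List.length_eq_zero_iff.mp (by simpa using hl'.symm)
        rw [this]
      · rcases v' with _ | ⟨y, ys⟩
        · simp at hl'
        · have hx : x ≠ c := by simpa using hu'h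
          have hy : y ≠ c := by simpa using hv'h
          cases x <;> cases y <;> cases c <;> simp_all
    have huv : u' = v' := by
      refine ih u' v' a b ?_ hl' hh' heq'
      have hN' : (c :: u0).length ≤ N + 1 := hN
      simp only [List.length_cons] at hN' hul
      omega
    rw [hue, hve, huv]

lemma encodePre_eq (w : List Bool) :
    encodePre w = (if w.head? = some false then [false] else []) ++ gEnc w := rfl

lemma pre_inj (u v : List Bool) (a b : ℕ) (hl : u.length = v.length)
    (heq : encodePre u ++ List.replicate a false
         = encodePre v ++ List.replicate b false) : u = v := by
  rw [encodePre_eq, encodePre_eq] at heq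
  rcases u with _ | ⟨x, u0⟩
  · exact (List.length_eq_zero_iff.mp (by simpa using hl.symm)).symm
  rcases v with _ | ⟨y, v0⟩
  · simp at hl
  cases x <;> cases y
  · -- both start with false
    simp only [List.head?_cons, if_pos rfl, List.singleton_append,
      List.cons_append] at heq
    obtain ⟨-, heq'⟩ := List.cons.inj heq
    exact key_inj (false :: u0).length _ _ a b le_rfl hl rfl heq'
  · -- u starts false, v starts true : contradiction
    have hg := gEnc_head? (true :: v0) (by simp)
    rcases hgv : gEnc (true :: v0) with _ | ⟨z, t⟩
    · rw [hgv] at hg; simp at hg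
    · rw [hgv] at hg
      simp at hg
      subst hg
      rw [hgv] at heq
      simp at heq
  · -- u starts true, v starts false : contradiction
    have hg := gEnc_head? (true :: u0) (by simp)
    rcases hgu : gEnc (true :: u0) with _ | ⟨z, t⟩
    · rw [hgu] at hg; simp at hg
    · rw [hgu] at hg
      simp at hg
      subst hg
      rw [hgu] at heq
      simp at heq
  · -- both start with true
    rw [List.head?_cons, List.head?_cons, if_neg (by simp), List.nil_append,
      List.nil_append] at heq
    exact key_inj (true :: u0).length _ _ a b le_rfl hl rfl heq

lemma runs_length_le (w : List Bool) : (runs w).length ≤ w.length := by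
  induction w with
  | nil => simp [runs]
  | cons x xs ih =>
    rcases h : runs xs with _ | ⟨r, rs⟩ <;> rw [h] at ih <;> simp only [runs, h]
    · simp
    · split <;> simp_all <;> omega

lemma gEnc_length (w : List Bool) :
    (gEnc w).length = 2 * w.length + (runs w).length := by
  have hf : w.length = ((runs w).map List.length).sum := by
    conv_lhs => rw [← runs_flatten w]
    rw [List.length_flatten]
  rw [gEnc, List.length_flatten, List.map_map]
  have : ((runs w).map (List.length ∘ fun r => sWord r.length)) =
      (runs w).map (fun r => 2 * r.length + 1) := by
    apply List.map_congr_left; intro r _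
    simp [sWord]; omega
  rw [this, hf]
  have aux : ∀ L : List (List Bool),
      (L.map (fun r => 2 * r.length + 1)).sum = 2 * (L.map List.length).sum + L.length := by
    intro L
    induction L with
    | nil => simp
    | cons r rs ih => simp [ih]; omega
  rw [aux]

lemma encodePre_length_le (w : List Bool) :
    (encodePre w).length ≤ 3 * w.length + 1 := by
  rw [encodePre_eq, List.length_append, gEnc_length]
  have h1 := runs_length_le w
  have h2 : (if w.head? = some false then ([false] : List Bool) else []).length ≤ 1 := by
    split <;> simp
  omega

lemma RC_rep_false (m : ℕ) : RunConstrained (List.replicate m false) := by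
  induction m with
  | zero => exact RunConstrained.nil
  | succ k ih => rw [List.replicate_succ]; exact RunConstrained.zero ih

lemma RC_sWord (i : ℕ) (t : List Bool) (ht : RunConstrained t) :
    RunConstrained (sWord i ++ t) := by
  rcases Nat.eq_zero_or_pos i with h | h
  · subst h
    simpa [sWord] using RunConstrained.zero ht
  · have := RunConstrained.block i h ht
    rwa [sWord]

lemma RC_flat (ns : List ℕ) (p : ℕ) :
    RunConstrained ((ns.map sWord).flatten ++ List.replicate p false) := by
  induction ns with
  | nil => simpa using RC_rep_false p
  | cons i is ih =>
    simp only [List.map_cons, List.flatten_cons, List.append_assoc]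
    exact RC_sWord i _ ih

/-- The run encoding is an injective map from `{0,1}ⁿ` into the set of
run-constrained binary strings of length `3n+1`. -/
theorem encode_injective (n : ℕ) :
    Function.Injective (encode n) ∧
      ∀ w : Fin n → Bool,
        RunConstrained (encode n w) ∧ (encode n w).length = 3 * n + 1 := by
  constructor
  · intro u v h
    rw [encode, encode] at h
    have hu : (List.ofFn u).length = (List.ofFn v).length := by simp
    exact List.ofFn_injective (pre_inj _ _ _ _ hu h)
  · intro w
    have hlen : (List.ofFn w).length = n := by simp
    have hle : (encodePre (List.ofFn w)).length ≤ 3 * n + 1 := by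
      have := encodePre_length_le (List.ofFn w)
      rw [hlen] at this
      exact this
    constructor
    · rw [encode]
      generalize 3 * n + 1 - (encodePre (List.ofFn w)).length = p
      rw [encodePre_eq, List.append_assoc]
      have hrc : RunConstrained (gEnc (List.ofFn w) ++
          List.replicate p false) := by
        have : gEnc (List.ofFn w) =
            (((runs (List.ofFn w)).map List.length).map sWord).flatten := by
          rw [gEnc, List.map_map]; rfl
        rw [this]
        exact RC_flat _ _
      split
      · exact RunConstrained.zero hrc
      · exact hrc
    · rw [encode, List.length_append, List.length_replicate]
      omega
end
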